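/- Let Θ be a finite-dimensional normed real vector space and let f : Θ → ℝ be lower semicontinuous, bounded below, and coercive (f(θ) → ∞ as ‖θ‖ → ∞). Then for every t ∈ ℝ, the sublevel set {q ∈ P(Θ) : ∫_Θ f dq ≤ t} of the functional Ψ(q) = ∫_Θ f dq is compact in the topology of weak convergence of probability measures; in particular, Ψ is a coercive functional on P(Θ). -/

import Mathlib

open MeasureTheory Filter Topology Set ENNReal NNReal BoundedContinuousFunction

namespace GVIAux

variable {Ω : Type*} [MeasurableSpace Ω] [TopologicalSpace Ω] [OpensMeasurableSpace Ω]

/-- Portmanteau-type lemma for lower semicontinuous nonnegative functions. -/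
lemma lintegral_le_liminf_of_lsc {ν : Measure Ω} {μs : ℕ → Measure Ω} {g : Ω → ℝ}
    (hg : LowerSemicontinuous g) (g_nn : 0 ≤ g)
    (h_opens : ∀ G, IsOpen G → ν G ≤ atTop.liminf (fun i ↦ μs i G)) :
    ∫⁻ x, ENNReal.ofReal (g x) ∂ν ≤
      atTop.liminf (fun i ↦ ∫⁻ x, ENNReal.ofReal (g x) ∂(μs i)) := by
  simp_rw [lintegral_eq_lintegral_meas_lt _ (Eventually.of_forall g_nn)
    hg.measurable.aemeasurable]
  calc ∫⁻ t in Set.Ioi (0:ℝ), ν {a | t < g a}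
      ≤ ∫⁻ t in Set.Ioi (0:ℝ), atTop.liminf (fun i ↦ (μs i) {a | t < g a}) :=
        lintegral_mono (fun t ↦ h_opens _ (hg.isOpen_preimage t))
    _ ≤ atTop.liminf (fun i ↦ ∫⁻ t in Set.Ioi (0:ℝ), (μs i) {a | t < g a}) :=
        lintegral_liminf_le (fun _ ↦ Antitone.measurable (fun s t hst ↦
          measure_mono (fun _ hω ↦ lt_of_le_of_lt hst hω)))

/-- If `ν(G) ≤ liminf μsₙ(G)` for all open `G`, then `μsₙ → ν` weakly. -/
lemma tendsto_of_open_liminf [HasOuterApproxClosed Ω]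
    {q : ProbabilityMeasure Ω} {μs : ℕ → ProbabilityMeasure Ω}
    (h : ∀ G, IsOpen G → (q : Measure Ω) G ≤
        atTop.liminf fun i ↦ (μs i : Measure Ω) G) :
    Tendsto μs atTop (𝓝 q) := by
  refine ProbabilityMeasure.tendsto_iff_forall_integral_tendsto.mpr ?_
  apply tendsto_integral_of_forall_integral_le_liminf_integral
  intro g g_nn
  exact integral_le_liminf_integral_of_forall_isOpen_measure_le_liminf_measure g_nn h

end GVIAux

theorem gvi_expected_loss_functional_coercive
    {Θ : Type*} [NormedAddCommGroup Θ] [NormedSpace ℝ Θ] [FiniteDimensional ℝ Θ]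
    [MeasurableSpace Θ] [BorelSpace Θ]
    (f : Θ → ℝ) (hf : LowerSemicontinuous f)
    (B : ℝ) (hB : ∀ θ, B ≤ f θ)
    (hcoer : Tendsto f (Filter.comap (fun θ => ‖θ‖) atTop) atTop)
    (t : ℝ) :
    IsCompact {q : ProbabilityMeasure Θ |
      ∫⁻ θ, ENNReal.ofReal (f θ - B) ∂(q : Measure Θ) ≤ ENNReal.ofReal (t - B)} := by
  classical
  set c := ENNReal.ofReal (t - B) with hc
  letI : MetricSpace (ProbabilityMeasure Θ) := TopologicalSpace.metrizableSpaceMetric _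
  refine IsSeqCompact.isCompact ?_
  intro μ hμ
  -- a countable basis, and the countable family of finite unions of basis elements
  obtain ⟨b, b_count, -, b_basis⟩ := TopologicalSpace.exists_countable_basis Θ
  set 𝔅 : Set (Set Θ) := {A | ∃ s : Set (Set Θ), s ⊆ b ∧ s.Finite ∧ A = ⋃₀ s} with h𝔅
  have 𝔅_count : 𝔅.Countable := by
    have : 𝔅 ⊆ (fun s : Set (Set Θ) => ⋃₀ s) '' {s | s.Finite ∧ s ⊆ b} := by
      rintro A ⟨s, hsb, hsf, rfl⟩
      exact ⟨s, ⟨hsf, hsb⟩, rfl⟩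
    exact (((Set.countable_setOf_finite_subset b_count).image _)).mono this
  have 𝔅_ne : 𝔅.Nonempty := ⟨∅, ∅, by simp⟩
  obtain ⟨u, hu⟩ := (Set.Countable.exists_eq_range 𝔅_count 𝔅_ne)
  have u_mem : ∀ k, u k ∈ 𝔅 := fun k => hu ▸ Set.mem_range_self k
  have u_open : ∀ k, IsOpen (u k) := by
    intro k
    obtain ⟨s, hsb, hsf, hs⟩ := u_mem k
    exact hs ▸ isOpen_sUnion fun A hA => b_basis.isOpen (hsb hA)
  have u_union : ∀ k j, ∃ m, u m = u k ∪ u j := by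
    intro k j
    obtain ⟨s, hsb, hsf, hs⟩ := u_mem k
    obtain ⟨s', hsb', hsf', hs'⟩ := u_mem j
    have : u k ∪ u j ∈ 𝔅 := ⟨s ∪ s', Set.union_subset hsb hsb', hsf.union hsf',
      by rw [hs, hs', Set.sUnion_union]⟩
    rw [hu] at this
    exact this
  have u_cover : ∀ (K V : Set Θ), IsCompact K → IsOpen V → K ⊆ V →
      ∃ k, K ⊆ u k ∧ u k ⊆ V := by
    intro K V hK hV hKV
    have hcov : K ⊆ ⋃ A ∈ {A | A ∈ b ∧ A ⊆ V}, A := by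
      intro x hx
      obtain ⟨A, hAb, hxA, hAV⟩ := b_basis.exists_subset_of_mem_open (hKV hx) hV
      exact Set.mem_biUnion ⟨hAb, hAV⟩ hxA
    obtain ⟨T, hTsub, hTfin, hTcov⟩ := hK.elim_finite_subcover_image
      (fun A hA => b_basis.isOpen hA.1) hcov
    have : ⋃₀ T ∈ 𝔅 := ⟨T, fun A hA => (hTsub hA).1, hTfin, rfl⟩
    rw [hu] at this
    obtain ⟨k, hk⟩ := this
    refine ⟨k, ?_, ?_⟩
    · rw [hk, Set.sUnion_eq_biUnion]; exact hTcov
    · rw [hk]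
      exact Set.sUnion_subset fun A hA => (hTsub hA).2
  -- diagonal subsequence making all `μ n (u k)` converge
  obtain ⟨ℓ, -, φ, φ_mono, hφ⟩ :=
    (isCompact_univ : IsCompact (Set.univ : Set (ℕ → ℝ≥0∞))).tendsto_subseq
      (x := fun n k => (μ n : Measure Θ) (u k)) (fun _ => Set.mem_univ _)
  rw [tendsto_pi_nhds] at hφ
  have hφ' : ∀ k, Tendsto (fun n => (μ (φ n) : Measure Θ) (u k)) atTop (𝓝 (ℓ k)) := hφ
  -- basic properties of the limit values ℓ
  have hl_le_one : ∀ k, ℓ k ≤ 1 := by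
    intro k
    exact le_of_tendsto (hφ' k) (Eventually.of_forall fun n => prob_le_one)
  have hl_mono : ∀ {k j}, u k ⊆ u j → ℓ k ≤ ℓ j := by
    intro k j hkj
    exact le_of_tendsto_of_tendsto' (hφ' k) (hφ' j) fun n => measure_mono hkj
  have hl_subadd : ∀ {k j m}, u m = u k ∪ u j → ℓ m ≤ ℓ k + ℓ j := by
    intro k j m hm
    refine le_of_tendsto_of_tendsto' (hφ' m) ((hφ' k).add (hφ' j)) fun n => ?_
    rw [hm]
    exact measure_union_le _ _
  have hl_add : ∀ {k j m}, u m = u k ∪ u j → Disjoint (u k) (u j) → ℓ m = ℓ k + ℓ j := by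
    intro k j m hm hd
    refine tendsto_nhds_unique (hφ' m) ?_
    have : (fun n => (μ (φ n) : Measure Θ) (u m)) =
        fun n => (μ (φ n) : Measure Θ) (u k) + (μ (φ n) : Measure Θ) (u j) := by
      funext n
      rw [hm, measure_union hd (u_open j).measurableSet]
    rw [this]
    exact (hφ' k).add (hφ' j)
  -- the candidate content on compact sets
  set L : TopologicalSpace.Compacts Θ → ℝ≥0∞ :=
    fun K => ⨅ (k : ℕ) (_ : (K : Set Θ) ⊆ u k), ℓ k with hLdef
  have hL_le : ∀ (K : TopologicalSpace.Compacts Θ) (k : ℕ), (K : Set Θ) ⊆ u k → L K ≤ ℓ k :=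
    fun K k hk => iInf₂_le k hk
  have hL_le_one : ∀ K, L K ≤ 1 := by
    intro K
    obtain ⟨k, hk, -⟩ := u_cover K Set.univ K.isCompact isOpen_univ (Set.subset_univ _)
    exact (hL_le K k hk).trans (hl_le_one k)
  have hL_ne_top : ∀ K, L K ≠ ⊤ := fun K => ((hL_le_one K).trans_lt ENNReal.one_lt_top).ne
  have hL_mono : ∀ (K₁ K₂ : TopologicalSpace.Compacts Θ), (K₁ : Set Θ) ⊆ K₂ → L K₁ ≤ L K₂ :=
    fun K₁ K₂ h => le_iInf₂ fun k hk => hL_le K₁ k (h.trans hk)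
  have hL_sup_le : ∀ K₁ K₂, L (K₁ ⊔ K₂) ≤ L K₁ + L K₂ := by
    intro K₁ K₂
    have h1 : L K₁ = ⨅ k : {k // (K₁ : Set Θ) ⊆ u k}, ℓ k := iInf_subtype'
    have h2 : L K₂ = ⨅ k : {k // (K₂ : Set Θ) ⊆ u k}, ℓ k := iInf_subtype'
    rw [h1, h2, ENNReal.iInf_add]
    refine le_iInf fun k => ?_
    rw [ENNReal.add_iInf]
    refine le_iInf fun j => ?_
    obtain ⟨m, hm⟩ := u_union k j
    refine (hL_le _ m ?_).trans (hl_subadd hm)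
    rw [hm]
    exact Set.union_subset (k.2.trans Set.subset_union_left) (j.2.trans Set.subset_union_right)
  have hL_sup_disjoint : ∀ K₁ K₂ : TopologicalSpace.Compacts Θ, Disjoint (K₁ : Set Θ) (K₂ : Set Θ) →
      L K₁ + L K₂ ≤ L (K₁ ⊔ K₂) := by
    intro K₁ K₂ hd
    obtain ⟨V₁, V₂, hV₁, hV₂, hKV₁, hKV₂, hVd⟩ :=
      SeparatedNhds.of_isCompact_isCompact K₁.isCompact K₂.isCompact hd
    refine le_iInf₂ fun m hm => ?_
    obtain ⟨k, hk, hk'⟩ := u_cover K₁ (u m ∩ V₁) K₁.isCompact ((u_open m).inter hV₁)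
      (Set.subset_inter (Set.subset_union_left.trans hm) hKV₁)
    obtain ⟨j, hj, hj'⟩ := u_cover K₂ (u m ∩ V₂) K₂.isCompact ((u_open m).inter hV₂)
      (Set.subset_inter (Set.subset_union_right.trans hm) hKV₂)
    obtain ⟨p, hp⟩ := u_union k j
    have hdisj : Disjoint (u k) (u j) :=
      hVd.mono (hk'.trans Set.inter_subset_right) (hj'.trans Set.inter_subset_right)
    calc L K₁ + L K₂ ≤ ℓ k + ℓ j := add_le_add (hL_le K₁ k hk) (hL_le K₂ j hj)
      _ = ℓ p := (hl_add hp hdisj).symm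
      _ ≤ ℓ m := hl_mono (by
          rw [hp]
          exact Set.union_subset (hk'.trans Set.inter_subset_left)
            (hj'.trans Set.inter_subset_left))
  -- assemble the content and its measure
  set 𝓒 : Content Θ :=
    { toFun := fun K => (L K).toNNReal
      mono' := fun K₁ K₂ h => ENNReal.toNNReal_mono (hL_ne_top K₂) (hL_mono K₁ K₂ h)
      sup_disjoint' := by
        intro K₁ K₂ hd _ _
        have hle := hL_sup_le K₁ K₂
        have hge := hL_sup_disjoint K₁ K₂ hd
        have heq : L (K₁ ⊔ K₂) = L K₁ + L K₂ := le_antisymm hle hge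
        show (L (K₁ ⊔ K₂)).toNNReal = (L K₁).toNNReal + (L K₂).toNNReal
        rw [heq, ENNReal.toNNReal_add (hL_ne_top K₁) (hL_ne_top K₂)]
      sup_le' := by
        intro K₁ K₂
        show (L (K₁ ⊔ K₂)).toNNReal ≤ (L K₁).toNNReal + (L K₂).toNNReal
        rw [← ENNReal.toNNReal_add (hL_ne_top K₁) (hL_ne_top K₂)]
        exact ENNReal.toNNReal_mono
          (ENNReal.add_ne_top.mpr ⟨hL_ne_top K₁, hL_ne_top K₂⟩)
          (hL_sup_le K₁ K₂) } with h𝓒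
  have h𝓒K : ∀ K, (𝓒 K : ℝ≥0∞) = L K := by
    intro K
    show ((L K).toNNReal : ℝ≥0∞) = L K
    exact ENNReal.coe_toNNReal (hL_ne_top K)
  set ν : Measure Θ := 𝓒.measure with hν
  -- the crucial liminf bound for open sets
  have key : ∀ G : Set Θ, IsOpen G →
      ν G ≤ atTop.liminf fun n => (μ (φ n) : Measure Θ) G := by
    intro G hG
    rw [hν, Content.measure_apply _ hG.measurableSet,
      𝓒.outerMeasure_of_isOpen _ hG]
    unfold MeasureTheory.Content.innerContent
    refine iSup₂_le fun K hK => ?_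
    obtain ⟨k, hKk, hkG⟩ := u_cover K G K.isCompact hG hK
    calc (𝓒 K : ℝ≥0∞) = L K := h𝓒K K
      _ ≤ ℓ k := hL_le K k hKk
      _ = atTop.liminf (fun n => (μ (φ n) : Measure Θ) (u k)) := (hφ' k).liminf_eq.symm
      _ ≤ atTop.liminf (fun n => (μ (φ n) : Measure Θ) G) :=
          liminf_le_liminf (Eventually.of_forall fun n => measure_mono hkG)
  -- tightness via coercivity and the Markov inequality
  have coer' : ∀ M : ℝ, ∃ R : ℝ, ∀ θ : Θ, f θ - B < M → θ ∈ Metric.closedBall (0:Θ) R := by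
    intro M
    have hev : ∀ᶠ θ in comap (fun θ : Θ => ‖θ‖) atTop, M + B ≤ f θ :=
      hcoer.eventually (eventually_ge_atTop (M + B))
    rw [eventually_comap] at hev
    obtain ⟨R, hR⟩ := eventually_atTop.mp hev
    refine ⟨R, fun θ hθ => ?_⟩
    simp only [Metric.mem_closedBall, dist_zero_right]
    by_contra h
    push_neg at h
    have := hR ‖θ‖ h.le θ rfl
    linarith
  have fmeas : Measurable fun θ : Θ => ENNReal.ofReal (f θ - B) :=
    (hf.measurable.sub measurable_const).ennreal_ofReal
  have markov : ∀ (n : ℕ) (M : ℝ), 0 < M →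
      (μ n : Measure Θ) {θ | ENNReal.ofReal M ≤ ENNReal.ofReal (f θ - B)} ≤
        c / ENNReal.ofReal M := by
    intro n M hM
    refine (meas_ge_le_lintegral_div fmeas.aemeasurable
      (ENNReal.ofReal_pos.mpr hM).ne' ENNReal.ofReal_ne_top).trans ?_
    exact ENNReal.div_le_div_right (hμ n) _
  have ball_bound : ∀ M : ℝ, 0 < M → ∃ R : ℝ, ∀ n : ℕ,
      1 - c / ENNReal.ofReal M ≤ (μ n : Measure Θ) (Metric.closedBall (0:Θ) R) := by
    intro M hM
    obtain ⟨R, hR⟩ := coer' M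
    refine ⟨R, fun n => ?_⟩
    have hms : MeasurableSet {θ : Θ | ENNReal.ofReal M ≤ ENNReal.ofReal (f θ - B)} :=
      fmeas measurableSet_Ici
    have hsub : {θ : Θ | ENNReal.ofReal M ≤ ENNReal.ofReal (f θ - B)}ᶜ ⊆
        Metric.closedBall (0:Θ) R := by
      intro θ hθ
      simp only [Set.mem_compl_iff, Set.mem_setOf_eq, not_le] at hθ
      refine hR θ ?_
      by_contra h
      push_neg at h
      exact absurd (ENNReal.ofReal_le_ofReal h) (not_le.mpr hθ)
    calc 1 - c / ENNReal.ofReal M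
        ≤ 1 - (μ n : Measure Θ) {θ | ENNReal.ofReal M ≤ ENNReal.ofReal (f θ - B)} :=
          tsub_le_tsub_left (markov n M hM) 1
      _ = (μ n : Measure Θ) {θ | ENNReal.ofReal M ≤ ENNReal.ofReal (f θ - B)}ᶜ := by
          rw [measure_compl hms (measure_ne_top _ _), measure_univ]
      _ ≤ (μ n : Measure Θ) (Metric.closedBall (0:Θ) R) := measure_mono hsub
  have L_ball : ∀ M : ℝ, 0 < M → ∃ K : TopologicalSpace.Compacts Θ,
      1 - c / ENNReal.ofReal M ≤ L K := by
    intro M hM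
    obtain ⟨R, hR⟩ := ball_bound M hM
    refine ⟨⟨Metric.closedBall 0 R, isCompact_closedBall 0 R⟩, ?_⟩
    refine le_iInf₂ fun k hk => ?_
    refine ge_of_tendsto (hφ' k) (Eventually.of_forall fun n => ?_)
    exact (hR (φ n)).trans (measure_mono hk)
  -- ν is a probability measure
  have ν_univ_le : ν Set.univ ≤ 1 := by
    rw [hν, Content.measure_apply _ MeasurableSet.univ,
      𝓒.outerMeasure_of_isOpen _ isOpen_univ]
    unfold MeasureTheory.Content.innerContent
    refine iSup₂_le fun K _ => ?_
    calc (𝓒 K : ℝ≥0∞) = L K := h𝓒K K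
      _ ≤ 1 := hL_le_one K
  have ν_univ_ge : (1:ℝ≥0∞) ≤ ν Set.univ := by
    refine ENNReal.le_of_forall_pos_le_add fun ε hε _ => ?_
    set δ : ℝ≥0∞ := min (ε : ℝ≥0∞) 1 with hδ
    have hδpos : 0 < δ := lt_min (by exact_mod_cast hε) one_pos
    have hδ1 : δ ≤ 1 := min_le_right _ _
    have hδtop : δ ≠ ⊤ := (hδ1.trans_lt ENNReal.one_lt_top).ne
    obtain ⟨M, hMpos, hMδ⟩ : ∃ M : ℝ, 0 < M ∧ c / ENNReal.ofReal M ≤ δ := by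
      rcases le_or_gt (t - B) 0 with h | h
      · refine ⟨1, one_pos, ?_⟩
        rw [hc, ENNReal.ofReal_eq_zero.mpr h, ENNReal.zero_div]
        exact zero_le
      · set d : ℝ := δ.toReal with hd
        have hd0 : 0 < d := ENNReal.toReal_pos hδpos.ne' hδtop
        have hdδ : ENNReal.ofReal d = δ := ENNReal.ofReal_toReal hδtop
        refine ⟨(t - B) / d, div_pos h hd0, ?_⟩
        rw [ENNReal.div_le_iff (ENNReal.ofReal_pos.mpr (div_pos h hd0)).ne'
          ENNReal.ofReal_ne_top]
        rw [hc, ← hdδ, ← ENNReal.ofReal_mul hd0.le]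
        rw [mul_div_cancel₀ _ hd0.ne']
    obtain ⟨K, hK⟩ := L_ball M hMpos
    have h1 : 1 - δ ≤ L K := (tsub_le_tsub_left hMδ 1).trans hK
    have h2 : L K ≤ ν Set.univ := by
      rw [hν, Content.measure_apply _ MeasurableSet.univ,
        𝓒.outerMeasure_of_isOpen _ isOpen_univ]
      exact (h𝓒K K) ▸ 𝓒.le_innerContent K ⟨Set.univ, isOpen_univ⟩ (Set.subset_univ _)
    calc (1:ℝ≥0∞) = (1 - δ) + δ := (tsub_add_cancel_of_le hδ1).symm
      _ ≤ ν Set.univ + ε := add_le_add (h1.trans h2) (min_le_left _ _)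
  have hνprob : IsProbabilityMeasure ν := ⟨le_antisymm ν_univ_le ν_univ_ge⟩
  set q : ProbabilityMeasure Θ := ⟨ν, hνprob⟩ with hq
  have key' : ∀ G : Set Θ, IsOpen G →
      (q : Measure Θ) G ≤ atTop.liminf fun n => (μ (φ n) : Measure Θ) G := key
  have hg_lsc : LowerSemicontinuous fun θ : Θ => f θ - B := by
    intro x y hy
    have hy' : y < f x - B := hy
    filter_upwards [hf x (y + B) (by linarith)] with z hz
    show y < f z - B
    linarith
  have hqS : ∫⁻ θ, ENNReal.ofReal (f θ - B) ∂(q : Measure Θ) ≤ c := by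
    refine (GVIAux.lintegral_le_liminf_of_lsc hg_lsc
      (fun θ => sub_nonneg.mpr (hB θ)) key').trans ?_
    calc atTop.liminf (fun n => ∫⁻ θ, ENNReal.ofReal (f θ - B) ∂(μ (φ n) : Measure Θ))
        ≤ atTop.liminf (fun _ : ℕ => c) :=
          liminf_le_liminf (Eventually.of_forall fun n => hμ (φ n))
      _ = c := liminf_const c
  exact ⟨q, hqS, φ, φ_mono, GVIAux.tendsto_of_open_liminf key'⟩
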